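/- Let n be a positive integer and let b, d be real numbers with b < 1 - n and d > 0. Then for every real polynomial g of degree at most n - 1, ∫_{-∞}^0 z^{d-1} (1-z)^{b-d-n} ₂F₁(-n, b; d; z) g(z) dz = 0 (the integral being absolutely convergent), where for z < 0 the factor z^{d-1} is interpreted as a fixed continuous branch, e.g. |z|^{d-1} up to a constant sign. -/

import Mathlib

open MeasureTheory Set

/-- The Pochhammer symbol `(x)_k = x (x+1) ⋯ (x+k-1)` for a real number `x`. -/
noncomputable def poch (x : ℝ) (k : ℕ) : ℝ := ∏ i ∈ Finset.range k, (x + i)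




@[simp] lemma poch_zero (x : ℝ) : poch x 0 = 1 := by simp [poch]

lemma poch_succ (x : ℝ) (k : ℕ) : poch x (k+1) = poch x k * (x + k) := by
  simp [poch, Finset.prod_range_succ]

lemma poch_add (x : ℝ) (a b : ℕ) : poch x (a + b) = poch x a * poch (x + a) b := by
  induction b with
  | zero => simp
  | succ b ih => rw [← add_assoc, poch_succ, ih, poch_succ]; push_cast; ring

lemma poch_pos {x : ℝ} (hx : 0 < x) (k : ℕ) : 0 < poch x k := by
  apply Finset.prod_pos; intro i _; positivity

lemma poch_nat_eq_zero {m : ℕ} {n : ℕ} (h : m < n) : poch (-(m:ℝ)) n = 0 := by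
  apply Finset.prod_eq_zero (Finset.mem_range.mpr h); simp

/-- Vandermonde's identity for Pochhammer symbols. -/
lemma poch_vandermonde (m : ℕ) (x y : ℝ) :
    poch (x + y) m = ∑ k ∈ Finset.range (m + 1),
      (m.choose k : ℝ) * poch x k * poch y (m - k) := by
  induction m with
  | zero => simp
  | succ m ih =>
    rw [poch_succ, ih, Finset.sum_mul]
    have key : ∀ k ∈ Finset.range (m + 1),
        (m.choose k : ℝ) * poch x k * poch y (m - k) * (x + y + m)
        = ((m.choose k : ℝ) * poch x (k+1) * poch y (m - k))
          + ((m.choose k : ℝ) * poch x k * poch y (m - k + 1)) := by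
      intro k hk
      rw [Finset.mem_range] at hk
      rw [poch_succ, poch_succ]
      have : ((m - k : ℕ) : ℝ) = (m : ℝ) - k := by
        rw [Nat.cast_sub (Nat.lt_succ_iff.mp hk)]
      rw [this]; ring
    rw [Finset.sum_congr rfl key, Finset.sum_add_distrib]
    -- notation: A + B = S
    rw [Finset.sum_range_succ' (fun k => ((m+1).choose k : ℝ) * poch x k * poch y (m + 1 - k)) (m+1)]
    rw [Finset.sum_range_succ' (fun k => (m.choose k : ℝ) * poch x k * poch y (m - k + 1)) m]
    rw [Finset.sum_range_succ (fun k => (m.choose k : ℝ) * poch x (k+1) * poch y (m - k)) m]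
    rw [Finset.sum_range_succ (fun k => ((m+1).choose (k+1) : ℝ) * poch x (k+1) * poch y (m + 1 - (k+1))) m]
    simp only [Nat.choose_self, Nat.cast_one, Nat.sub_self, poch_zero, Nat.choose_zero_right,
      Nat.add_sub_cancel, Nat.succ_sub_one, add_tsub_cancel_right]
    simp only [Nat.sub_zero]
    have hc : ∀ k ∈ Finset.range m,
        ((m+1).choose (k+1) : ℝ) * poch x (k+1) * poch y (m + 1 - (k+1))
        = (m.choose k : ℝ) * poch x (k+1) * poch y (m - k)
          + (m.choose (k+1) : ℝ) * poch x (k+1) * poch y (m - (k+1) + 1) := by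
      intro k hk
      rw [Finset.mem_range] at hk
      have e1 : m + 1 - (k+1) = m - k := by omega
      have e2 : m - (k+1) + 1 = m - k := by omega
      rw [e1, e2, Nat.choose_succ_succ, Nat.cast_add]
      ring
    rw [Finset.sum_congr rfl hc, Finset.sum_add_distrib]
    ring

lemma sum_triangle (n : ℕ) (F : ℕ → ℕ → ℝ) :
    ∑ k ∈ Finset.range (n+1), ∑ j ∈ Finset.range (n-k+1), F k j
    = ∑ s ∈ Finset.range (n+1), ∑ k ∈ Finset.range (s+1), F k (s-k) := by
  rw [Finset.sum_sigma', Finset.sum_sigma']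
  apply Finset.sum_nbij' (fun p => (⟨p.1 + p.2, p.1⟩ : (_ : ℕ) × ℕ))
    (fun q => (⟨q.2, q.1 - q.2⟩ : (_ : ℕ) × ℕ))
  · intro p hp
    simp only [Finset.mem_sigma, Finset.mem_range] at hp ⊢
    omega
  · intro q hq
    simp only [Finset.mem_sigma, Finset.mem_range] at hq ⊢
    omega
  · rintro ⟨a, c⟩ hp
    simp only [Finset.mem_sigma, Finset.mem_range] at hp
    simp
  · rintro ⟨s, k⟩ hq
    simp only [Finset.mem_sigma, Finset.mem_range] at hq
    simp only [Sigma.mk.inj_iff, heq_eq_eq]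
    exact ⟨by omega, trivial⟩
  · rintro ⟨a, c⟩ hp
    simp only [Finset.mem_sigma, Finset.mem_range] at hp
    simp

/-- Saalschütz's theorem (in product form). -/
lemma saalschutz (n : ℕ) (d e f : ℝ) :
    ∑ k ∈ Finset.range (n+1),
      (n.choose k : ℝ) * poch (d-e-f) k * poch e k * poch (d+k) (n-k) * poch f (n-k)
    = poch (d-e) n * poch (e+f) n := by
  have step1 : ∀ k ∈ Finset.range (n+1),
      (n.choose k : ℝ) * poch (d-e-f) k * poch e k * poch (d+k) (n-k) * poch f (n-k)
      = ∑ j ∈ Finset.range (n-k+1),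
          (n.choose k : ℝ) * ((n-k).choose j : ℝ) * poch (d-e-f) k * poch e k *
            poch (e+k) j * poch (d-e) (n-k-j) * poch f (n-k) := by
    intro k hk
    have hv : poch (d+k) (n-k) = ∑ j ∈ Finset.range (n-k+1),
        ((n-k).choose j : ℝ) * poch (e+k) j * poch (d-e) (n-k-j) := by
      have : d + (k:ℝ) = (e + k) + (d - e) := by ring
      rw [this, poch_vandermonde]
    rw [hv, Finset.mul_sum, Finset.sum_mul]
    apply Finset.sum_congr rfl
    intro j hj
    ring
  rw [Finset.sum_congr rfl step1, sum_triangle]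
  have step2 : ∀ s ∈ Finset.range (n+1),
      (∑ k ∈ Finset.range (s+1),
        (n.choose k : ℝ) * ((n-k).choose (s-k) : ℝ) * poch (d-e-f) k * poch e k *
          poch (e+k) (s-k) * poch (d-e) (n-k-(s-k)) * poch f (n-k))
      = (n.choose s : ℝ) * poch e s * poch f (n-s) * poch (d-e) n := by
    intro s hs
    rw [Finset.mem_range, Nat.lt_succ_iff] at hs
    have hterm : ∀ k ∈ Finset.range (s+1),
        (n.choose k : ℝ) * ((n-k).choose (s-k) : ℝ) * poch (d-e-f) k * poch e k *
          poch (e+k) (s-k) * poch (d-e) (n-k-(s-k)) * poch f (n-k)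
        = ((n.choose s : ℝ) * poch e s * poch (d-e) (n-s) * poch f (n-s)) *
            ((s.choose k : ℝ) * poch (d-e-f) k * poch (f+((n-s : ℕ):ℝ)) (s-k)) := by
      intro k hk
      rw [Finset.mem_range, Nat.lt_succ_iff] at hk
      have e1 : n-k-(s-k) = n-s := by omega
      have e2 : poch e k * poch (e+(k:ℝ)) (s-k) = poch e s := by
        rw [← poch_add]; congr 1; omega
      have e3 : poch f (n-k) = poch f (n-s) * poch (f+((n-s : ℕ):ℝ)) (s-k) := by
        rw [← poch_add]; congr 1; omega
      have e4 : (n.choose k : ℝ) * ((n-k).choose (s-k) : ℝ)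
          = (n.choose s : ℝ) * (s.choose k : ℝ) := by
        rw [← Nat.cast_mul, ← Nat.cast_mul, ← Nat.choose_mul hk]
      calc (n.choose k : ℝ) * ((n-k).choose (s-k) : ℝ) * poch (d-e-f) k * poch e k *
          poch (e+k) (s-k) * poch (d-e) (n-k-(s-k)) * poch f (n-k)
          = ((n.choose k : ℝ) * ((n-k).choose (s-k) : ℝ)) * poch (d-e-f) k *
              (poch e k * poch (e+(k:ℝ)) (s-k)) * poch (d-e) (n-k-(s-k)) * poch f (n-k) := by
            ring
        _ = _ := by rw [e1, e2, e3, e4]; ring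
    rw [Finset.sum_congr rfl hterm, ← Finset.mul_sum, ← poch_vandermonde]
    have e5 : (d-e-f) + (f+((n-s : ℕ):ℝ)) = (d-e) + ((n-s : ℕ):ℝ) := by ring
    have e6 : poch (d-e) (n-s) * poch ((d-e) + ((n-s : ℕ):ℝ)) s = poch (d-e) n := by
      rw [← poch_add]; congr 1; omega
    rw [e5, ← e6]
    ring
  rw [Finset.sum_congr rfl step2, poch_vandermonde n e f, Finset.mul_sum]
  apply Finset.sum_congr rfl
  intro s hs
  ring

lemma poch_neg_nat (n k : ℕ) (hk : k ≤ n) :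
    poch (-(n:ℝ)) k * (-1)^k = (Nat.factorial k : ℝ) * (n.choose k : ℝ) := by
  induction k with
  | zero => simp
  | succ k ih =>
    have hk' : k ≤ n := Nat.le_of_succ_le hk
    have h1 : poch (-(n:ℝ)) k * (-1)^k = (Nat.factorial k : ℝ) * (n.choose k : ℝ) := ih hk'
    rw [poch_succ, pow_succ]
    have h2 : (-(n:ℝ) + k) * (-1) = (n : ℝ) - k := by ring
    calc poch (-(n:ℝ)) k * (-(n:ℝ) + k) * ((-1)^k * -1)
        = (poch (-(n:ℝ)) k * (-1)^k) * ((-(n:ℝ) + k) * (-1)) := by ring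
      _ = (Nat.factorial k : ℝ) * (n.choose k : ℝ) * ((n : ℝ) - k) := by rw [h1, h2]
      _ = (Nat.factorial (k+1) : ℝ) * (n.choose (k+1) : ℝ) := by
          have : ((n : ℝ) - k) = ((n - k : ℕ) : ℝ) := by
            rw [Nat.cast_sub hk']
          rw [this, ← Nat.cast_mul, ← Nat.cast_mul, mul_assoc, ← Nat.cast_mul,
            ← Nat.choose_succ_right_eq, Nat.factorial_succ]
          push_cast
          ring

lemma Gamma_shift {x : ℝ} (hx : 0 < x) (k : ℕ) :
    Real.Gamma (x + k) = Real.Gamma x * poch x k := by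
  induction k with
  | zero => simp
  | succ k ih =>
    have : x + ((k:ℕ)+1:ℕ) = (x + k) + 1 := by push_cast; ring
    rw [this, Real.Gamma_add_one (by positivity), ih, poch_succ]
    ring

lemma key_vanish (n m : ℕ) (hm : m < n) (b d : ℝ) (hd : 0 < d) (hb : b < 1 - n) :
    ∑ k ∈ Finset.range (n+1),
      (poch (-(n:ℝ)) k * poch b k / (poch d k * (Nat.factorial k : ℝ))) * (-1:ℝ)^k
        * Real.Gamma (d + m + k) * Real.Gamma ((n:ℝ) - b - m - k) = 0 := by
  have hP1 : 0 < poch d n := poch_pos hd n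
  have hP2 : 0 < poch (-b - m) n := by
    apply Finset.prod_pos
    intro i hi
    rw [Finset.mem_range] at hi
    have : (m : ℝ) ≤ (n : ℝ) - 1 := by
      have := Nat.le_sub_one_of_lt hm
      calc (m:ℝ) ≤ ((n-1 : ℕ):ℝ) := by exact_mod_cast this
        _ ≤ (n:ℝ) - 1 := by
            rw [Nat.cast_sub (by omega)]; simp
    nlinarith [ (by positivity : (0:ℝ) ≤ (i:ℝ)) ]
  have hsum : (∑ k ∈ Finset.range (n+1),
      (poch (-(n:ℝ)) k * poch b k / (poch d k * (Nat.factorial k : ℝ))) * (-1:ℝ)^k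
        * Real.Gamma (d + m + k) * Real.Gamma ((n:ℝ) - b - m - k))
      * (poch d n * poch (-b - m) n)
      = Real.Gamma (d + m) * Real.Gamma ((n:ℝ) - b - m) *
        ∑ k ∈ Finset.range (n+1),
          (n.choose k : ℝ) * poch b k * poch (d + m) k * poch (d+k) (n-k) * poch (-b - m) (n-k) := by
    rw [Finset.sum_mul, Finset.mul_sum]
    apply Finset.sum_congr rfl
    intro k hk
    rw [Finset.mem_range, Nat.lt_succ_iff] at hk
    have g1 : Real.Gamma (d + m + k) = Real.Gamma (d + m) * poch (d + m) k :=
      Gamma_shift (by positivity) k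
    have hx2 : (0:ℝ) < (n:ℝ) - b - m - k := by
      have h1 : (k:ℝ) ≤ n := by exact_mod_cast hk
      have h2 : (m:ℝ) + 1 ≤ n := by exact_mod_cast hm
      nlinarith
    have g2 : Real.Gamma ((n:ℝ) - b - m) = Real.Gamma ((n:ℝ) - b - m - k) * poch ((n:ℝ) - b - m - k) k := by
      have g2' := Gamma_shift hx2 k
      have e : (n:ℝ) - b - m - k + k = (n:ℝ) - b - m := by ring
      rw [e] at g2'
      exact g2'
    have g3 : poch d n = poch d k * poch (d + k) (n - k) := by
      rw [← poch_add]; congr 1; omega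
    have g4 : poch (-b - m) n = poch (-b - m) (n-k) * poch ((n:ℝ) - b - m - k) k := by
      have e : -b - (m:ℝ) + ((n-k : ℕ):ℝ) = (n:ℝ) - b - m - k := by
        rw [Nat.cast_sub hk]; ring
      rw [← e, ← poch_add]; congr 1; omega
    have g5 : poch (-(n:ℝ)) k * (-1:ℝ)^k = (Nat.factorial k : ℝ) * (n.choose k : ℝ) :=
      poch_neg_nat n k hk
    have hpdk : poch d k ≠ 0 := ne_of_gt (poch_pos hd k)
    have hfk : (Nat.factorial k : ℝ) ≠ 0 := by positivity
    rw [g1, g3, g4]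
    field_simp
    linear_combination (poch b k * poch (d+(m:ℝ)) k *
        Real.Gamma ((n:ℝ)-b-m-k) * poch (d+(k:ℝ)) (n-k) * poch (-b-(m:ℝ)) (n-k) *
        poch ((n:ℝ)-b-m-k) k) * g5
      - ((n.choose k : ℝ) * poch b k * poch (d+(m:ℝ)) k *
        poch (d+(k:ℝ)) (n-k) * poch (-b-(m:ℝ)) (n-k) * (Nat.factorial k : ℝ)) * g2
  have hS := saalschutz n d (d + (m:ℝ)) (-b - (m:ℝ))
  have e1 : d - (d + (m:ℝ)) - (-b - (m:ℝ)) = b := by ring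
  have e2 : d - (d + (m:ℝ)) = -(m:ℝ) := by ring
  have e3 : d + (m:ℝ) + (-b - (m:ℝ)) = d - b := by ring
  rw [e1, e2, e3, poch_nat_eq_zero hm, zero_mul] at hS
  rw [hS, mul_zero] at hsum
  have hPne : poch d n * poch (-b - (m:ℝ)) n ≠ 0 := by positivity
  exact (mul_eq_zero.mp hsum).resolve_right hPne

open MeasureTheory Set

lemma beta01 (A B : ℝ) (hA : 0 < A) (hB : 0 < B) :
    IntegrableOn (fun t : ℝ => t ^ (A-1) * (1-t) ^ (B-1)) (Set.Ioo 0 1) ∧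
    ∫ t in Set.Ioo (0:ℝ) 1, t ^ (A-1) * (1-t) ^ (B-1)
      = Real.Gamma A * Real.Gamma B / Real.Gamma (A+B) := by
  have hA' : 0 < (A:ℂ).re := by simpa using hA
  have hB' : 0 < (B:ℂ).re := by simpa using hB
  have heq : EqOn (fun x : ℝ => (x:ℂ) ^ ((A:ℂ) - 1) * (1 - (x:ℂ)) ^ ((B:ℂ) - 1))
      (fun x : ℝ => ((x ^ (A-1) * (1-x) ^ (B-1) : ℝ) : ℂ)) (Ioo 0 1) := by
    intro x hx
    obtain ⟨hx0, hx1⟩ := hx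
    simp only
    rw [Complex.ofReal_mul, Complex.ofReal_cpow hx0.le, Complex.ofReal_cpow (by linarith : (0:ℝ) ≤ 1 - x)]
    push_cast
    ring
  -- integrability
  have hconv := (Complex.betaIntegral_convergent hA' hB')
  rw [intervalIntegrable_iff_integrableOn_Ioc_of_le zero_le_one] at hconv
  have hconv2 : IntegrableOn (fun x : ℝ => (x:ℂ) ^ ((A:ℂ) - 1) * (1 - (x:ℂ)) ^ ((B:ℂ) - 1))
      (Ioo 0 1) := hconv.mono_set Ioo_subset_Ioc_self
  have hint : IntegrableOn (fun t : ℝ => t ^ (A-1) * (1-t) ^ (B-1)) (Set.Ioo 0 1) := by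
    have hnorm := hconv2.norm
    apply IntegrableOn.congr_fun hnorm _ measurableSet_Ioo
    intro x hx
    have h2 := heq hx
    simp only at h2 ⊢
    rw [h2]
    simp only [Complex.norm_real, Real.norm_eq_abs]
    rw [abs_of_nonneg]
    obtain ⟨hx0, hx1⟩ := hx
    have h1x : (0:ℝ) < 1 - x := by linarith
    positivity
  refine ⟨hint, ?_⟩
  -- value
  have hc := Complex.Gamma_mul_Gamma_eq_betaIntegral hA' hB'
  have hbeta : Complex.betaIntegral (A:ℂ) (B:ℂ)
      = ((∫ t in Set.Ioo (0:ℝ) 1, t ^ (A-1) * (1-t) ^ (B-1) : ℝ) : ℂ) := by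
    rw [Complex.betaIntegral]
    rw [intervalIntegral.integral_of_le zero_le_one, integral_Ioc_eq_integral_Ioo]
    rw [setIntegral_congr_fun measurableSet_Ioo heq]
    exact integral_ofReal
  rw [hbeta, ← Complex.ofReal_add, Complex.Gamma_ofReal, Complex.Gamma_ofReal,
    Complex.Gamma_ofReal, ← Complex.ofReal_mul, ← Complex.ofReal_mul] at hc
  have hc' := Complex.ofReal_injective hc
  have hGpos : 0 < Real.Gamma (A+B) := Real.Gamma_pos_of_pos (by linarith)
  field_simp
  linarith [hc']

lemma betaIoi (A B : ℝ) (hA : 0 < A) (hB : 0 < B) :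
    IntegrableOn (fun u : ℝ => u ^ (A-1) * (1+u) ^ (-(A+B))) (Set.Ioi 0) ∧
    ∫ u in Set.Ioi (0:ℝ), u ^ (A-1) * (1+u) ^ (-(A+B))
      = Real.Gamma A * Real.Gamma B / Real.Gamma (A+B) := by
  set φ : ℝ → ℝ := fun t => t / (1 - t) with hφ
  set φ' : ℝ → ℝ := fun t => ((1 - t)^2)⁻¹ with hφ'
  have hderiv : ∀ t ∈ Ioo (0:ℝ) 1, HasDerivWithinAt φ (φ' t) (Ioo 0 1) t := by
    intro t ht
    have h1 : (1:ℝ) - t ≠ 0 := by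
      obtain ⟨_, h⟩ := ht; intro hc; rw [sub_eq_zero] at hc; exact absurd hc.symm (ne_of_lt h)
    have : HasDerivAt φ ((1 * (1-t) - t * (-1)) / (1-t)^2) t := by
      exact (hasDerivAt_id t).div (((hasDerivAt_id t).const_sub 1)) h1
    have h2 : (1 * (1-t) - t * (-1)) / (1-t)^2 = φ' t := by
      simp only [hφ']
      field_simp
      ring
    rw [h2] at this
    exact this.hasDerivWithinAt
  have hinj : InjOn φ (Ioo 0 1) := by
    intro t1 h1 t2 h2 he
    have n1 : (1:ℝ) - t1 ≠ 0 := by obtain ⟨_, h⟩ := h1; intro hc; rw [sub_eq_zero] at hc; exact absurd hc.symm (ne_of_lt h)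
    have n2 : (1:ℝ) - t2 ≠ 0 := by obtain ⟨_, h⟩ := h2; intro hc; rw [sub_eq_zero] at hc; exact absurd hc.symm (ne_of_lt h)
    simp only [hφ] at he
    rw [div_eq_div_iff n1 n2] at he
    nlinarith [he]
  have himage : φ '' (Ioo 0 1) = Ioi (0:ℝ) := by
    ext u
    constructor
    · rintro ⟨t, ht, rfl⟩
      exact div_pos ht.1 (by linarith [ht.2])
    · intro hu
      refine ⟨u / (1 + u), ⟨div_pos hu (by linarith [mem_Ioi.mp hu]), ?_⟩, ?_⟩
      · rw [div_lt_one (by linarith [mem_Ioi.mp hu])]; linarith [mem_Ioi.mp hu]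
      · have h1u : (1:ℝ) + u ≠ 0 := by have := mem_Ioi.mp hu; positivity
        simp only [hφ]
        rw [show (1:ℝ) - u/(1+u) = 1/(1+u) by field_simp; ring]
        field_simp
  have hkey : ∀ t ∈ Ioo (0:ℝ) 1,
      |φ' t| • ((fun u : ℝ => u ^ (A-1) * (1+u) ^ (-(A+B))) (φ t))
        = t ^ (A-1) * (1-t) ^ (B-1) := by
    intro t ht
    obtain ⟨ht0, ht1⟩ := ht
    have hs : (0:ℝ) < 1 - t := by linarith
    have e1 : (1:ℝ) + φ t = (1-t)⁻¹ := by
      simp only [hφ]; field_simp; ring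
    have e2 : φ t ^ (A-1) = t ^ (A-1) * ((1-t) ^ (A-1))⁻¹ := by
      simp only [hφ]
      rw [Real.div_rpow ht0.le hs.le, div_eq_mul_inv]
    have e3 : ((1-t)⁻¹) ^ (-(A+B)) = (1-t) ^ (A+B) := by
      rw [Real.inv_rpow hs.le, ← Real.rpow_neg hs.le, neg_neg]
    have e4 : |φ' t| = ((1-t) ^ ((2:ℕ):ℝ))⁻¹ := by
      simp only [hφ']
      rw [Real.rpow_natCast, abs_of_pos]
      positivity
    show |φ' t| * (φ t ^ (A-1) * (1 + φ t) ^ (-(A+B))) = t ^ (A-1) * (1-t) ^ (B-1)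
    rw [e1, e2, e3, e4]
    rw [← Real.rpow_neg hs.le, ← Real.rpow_neg hs.le]
    rw [show t ^ (A-1) * ((1-t) ^ (-(A-1))) * (1-t) ^ (A+B) = t ^ (A-1) * (((1-t) ^ (-(A-1))) * (1-t) ^ (A+B)) from by ring,
      ← Real.rpow_add hs, mul_comm ((1-t) ^ (-((2:ℕ):ℝ))), mul_assoc, ← Real.rpow_add hs]
    norm_num
    refine Or.inl ?_
    congr 1
    ring
  constructor
  · rw [← himage,
      MeasureTheory.integrableOn_image_iff_integrableOn_abs_deriv_smul measurableSet_Ioo hderiv hinj]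
    exact ((beta01 A B hA hB).1.congr_fun (fun t ht => (hkey t ht).symm) measurableSet_Ioo)
  · rw [← himage,
      MeasureTheory.integral_image_eq_integral_abs_deriv_smul measurableSet_Ioo hderiv hinj,
      setIntegral_congr_fun measurableSet_Ioo hkey]
    exact (beta01 A B hA hB).2

lemma integrableOn_Iio_iff_neg (F : ℝ → ℝ) :
    IntegrableOn F (Iio (0:ℝ)) ↔ IntegrableOn (fun x => F (-x)) (Ioi (0:ℝ)) := by
  have A : MeasurableEmbedding (fun x : ℝ => -x) :=
    (Homeomorph.neg ℝ).isClosedEmbedding.measurableEmbedding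
  have hmap : Measure.map (fun x : ℝ => -x) (volume.restrict (Ioi 0))
      = volume.restrict (Iio 0) := by
    have h1 : Ioi (0:ℝ) = (fun x : ℝ => -x) ⁻¹' (Iio 0) := by simp
    rw [h1, ← Measure.restrict_map A.measurable measurableSet_Iio]
    congr 1
    exact Measure.map_neg_eq_self (volume : Measure ℝ)
  rw [IntegrableOn, ← hmap, A.integrable_map_iff]
  rfl

lemma integral_Iio_eq_neg (F : ℝ → ℝ) :
    ∫ z in Iio (0:ℝ), F z = ∫ u in Ioi (0:ℝ), F (-u) := by
  rw [integral_comp_neg_Ioi (0:ℝ) F, show -(0:ℝ) = 0 from neg_zero, integral_Iic_eq_integral_Iio]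

lemma moment_Iio (c w : ℝ) (j : ℕ) (hA : 0 < c + j) (hB : 0 < -(w + c + j)) :
    IntegrableOn (fun z : ℝ => |z| ^ (c - 1) * (1 - z) ^ w * z ^ j) (Set.Iio 0) ∧
    ∫ z in Set.Iio (0:ℝ), |z| ^ (c - 1) * (1 - z) ^ w * z ^ j
      = (-1:ℝ)^j * (Real.Gamma (c+j) * Real.Gamma (-(w+c+j)) / Real.Gamma (-w)) := by
  set A : ℝ := c + j with hAdef
  set B : ℝ := -(w + c + j) with hBdef
  have hAB : A + B = -w := by rw [hAdef, hBdef]; ring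
  have hbeta := betaIoi A B hA hB
  have hEq : ∀ u ∈ Ioi (0:ℝ),
      (fun x => (fun z : ℝ => |z| ^ (c - 1) * (1 - z) ^ w * z ^ j) (-x)) u
      = (-1:ℝ)^j * (u ^ (A-1) * (1+u) ^ (-(A+B))) := by
    intro u hu
    have hu0 : (0:ℝ) < u := hu
    simp only
    rw [abs_neg, abs_of_pos hu0, sub_neg_eq_add, neg_pow]
    have e1 : (1 + u) ^ w = (1+u) ^ (-(A+B)) := by rw [hAB, neg_neg]
    have e2 : u ^ (c-1) * u ^ j = u ^ (A-1) := by
      rw [← Real.rpow_natCast u j, ← Real.rpow_add hu0, hAdef]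
      congr 1
      ring
    calc u ^ (c-1) * (1+u) ^ w * ((-1:ℝ)^j * u ^ j)
        = (-1:ℝ)^j * ((u ^ (c-1) * u ^ j) * (1+u) ^ w) := by ring
      _ = _ := by rw [e1, e2]
  constructor
  · rw [integrableOn_Iio_iff_neg]
    exact IntegrableOn.congr_fun (hbeta.1.const_mul ((-1:ℝ)^j))
      (fun u hu => (hEq u hu).symm) measurableSet_Ioi
  · rw [integral_Iio_eq_neg, setIntegral_congr_fun measurableSet_Ioi hEq,
      MeasureTheory.integral_const_mul, hbeta.2, hAB]

/-- The terminating Gauss hypergeometric polynomial `₂F₁(-n, b; d; z)`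
    as a real polynomial in `z`. -/
noncomputable def hypPoly (n : ℕ) (b d : ℝ) : Polynomial ℝ :=
  ∑ k ∈ Finset.range (n + 1),
    Polynomial.C ((poch (-(n : ℝ)) k * poch b k) / (poch d k * (Nat.factorial k))) *
      Polynomial.X ^ k


/-- For `b < 1 - n` and `d > 0`, the polynomial `₂F₁(-n, b; d; z)` is orthogonal on
`(-∞, 0)` with respect to the weight `z^(d-1) (1-z)^(b-d-n)` (the factor `z^(d-1)`
interpreted via the continuous branch `|z|^(d-1)` for `z < 0`) to every real polynomial
`g` of degree at most `n - 1`, the integral being absolutely convergent. -/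

theorem hyp_orthogonality_Iio_zero (n : ℕ) (hn : 0 < n) (b d : ℝ)
    (hb : b < 1 - n) (hd : 0 < d) (g : Polynomial ℝ) (hg : g.natDegree < n) :
    IntegrableOn
      (fun z : ℝ => Real.rpow |z| (d - 1) * Real.rpow (1 - z) (b - d - n) *
        (hypPoly n b d).eval z * g.eval z) (Set.Iio 0) ∧
    ∫ z in Set.Iio (0 : ℝ),
      Real.rpow |z| (d - 1) * Real.rpow (1 - z) (b - d - n) *
        (hypPoly n b d).eval z * g.eval z = 0 := by
  simp only [Real.rpow_eq_pow]
  set c : ℕ → ℝ := fun k => poch (-(n:ℝ)) k * poch b k / (poch d k * (Nat.factorial k : ℝ))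
    with hc
  -- expansion of the integrand
  have hPeval : ∀ z : ℝ, (hypPoly n b d).eval z
      = ∑ k ∈ Finset.range (n+1), c k * z ^ k := by
    intro z
    simp [hypPoly, Polynomial.eval_finset_sum, hc]
  have hgeval : ∀ z : ℝ, g.eval z = ∑ m ∈ Finset.range n, g.coeff m * z ^ m := by
    intro z
    exact Polynomial.eval_eq_sum_range' hg z
  have hexpand : (fun z : ℝ => |z| ^ (d-1) * (1-z) ^ (b-d-n) *
        (hypPoly n b d).eval z * g.eval z)
      = fun z : ℝ => ∑ k ∈ Finset.range (n+1), ∑ m ∈ Finset.range n,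
          (c k * g.coeff m) * (|z| ^ (d-1) * (1-z) ^ (b-d-n) * z ^ (k+m)) := by
    funext z
    rw [hPeval, hgeval]
    conv_rhs => rw [Finset.sum_comm]
    rw [Finset.mul_sum]
    apply Finset.sum_congr rfl
    intro m _
    rw [Finset.mul_sum, Finset.sum_mul]
    apply Finset.sum_congr rfl
    intro k _
    rw [pow_add]
    ring
  -- moments
  have hmom : ∀ k m : ℕ, k ≤ n → m < n →
      IntegrableOn (fun z : ℝ => |z| ^ (d-1) * (1-z) ^ (b-d-n) * z ^ (k+m)) (Set.Iio 0) ∧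
      ∫ z in Set.Iio (0:ℝ), |z| ^ (d-1) * (1-z) ^ (b-d-n) * z ^ (k+m)
        = (-1:ℝ)^(k+m) * (Real.Gamma (d + (k+m : ℕ)) *
            Real.Gamma (-((b-d-n) + d + (k+m : ℕ))) / Real.Gamma (-(b-d-n))) := by
    intro k m hk hm
    apply moment_Iio
    · have : (0:ℝ) ≤ ((k+m : ℕ) : ℝ) := Nat.cast_nonneg _
      linarith
    · have h1 : ((k+m : ℕ) : ℝ) ≤ 2 * n - 1 := by
        have : k + m ≤ 2*n - 1 := by omega
        have h2 : ((k+m : ℕ) : ℝ) ≤ ((2*n - 1 : ℕ) : ℝ) := by exact_mod_cast this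
        have h3 : ((2*n - 1 : ℕ) : ℝ) = 2*(n:ℝ) - 1 := by
          rw [Nat.cast_sub (by omega)]
          push_cast
          ring
        linarith [h2, h3.le]
      have hn1 : (1:ℝ) ≤ (n:ℝ) := by exact_mod_cast hn
      nlinarith
  have hint : ∀ k ∈ Finset.range (n+1), ∀ m ∈ Finset.range n,
      IntegrableOn (fun z : ℝ => (c k * g.coeff m) *
        (|z| ^ (d-1) * (1-z) ^ (b-d-n) * z ^ (k+m))) (Set.Iio 0) := by
    intro k hk m hm
    rw [Finset.mem_range, Nat.lt_succ_iff] at hk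
    rw [Finset.mem_range] at hm
    exact (hmom k m hk hm).1.const_mul _
  constructor
  · rw [hexpand]
    apply MeasureTheory.integrable_finset_sum
    intro k hk
    apply MeasureTheory.integrable_finset_sum
    intro m hm
    exact hint k hk m hm
  · rw [hexpand]
    rw [MeasureTheory.integral_finset_sum _ (fun k hk =>
      MeasureTheory.integrable_finset_sum _ (fun m hm => hint k hk m hm))]
    have hsw : ∀ k ∈ Finset.range (n+1),
        ∫ z in Set.Iio (0:ℝ), ∑ m ∈ Finset.range n,
          (c k * g.coeff m) * (|z| ^ (d-1) * (1-z) ^ (b-d-n) * z ^ (k+m))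
        = ∑ m ∈ Finset.range n, ∫ z in Set.Iio (0:ℝ),
          (c k * g.coeff m) * (|z| ^ (d-1) * (1-z) ^ (b-d-n) * z ^ (k+m)) := by
      intro k hk
      exact MeasureTheory.integral_finset_sum _ (fun m hm => hint k hk m hm)
    rw [Finset.sum_congr rfl hsw]
    have hval : ∀ k ∈ Finset.range (n+1), ∀ m ∈ Finset.range n,
        ∫ z in Set.Iio (0:ℝ),
          (c k * g.coeff m) * (|z| ^ (d-1) * (1-z) ^ (b-d-n) * z ^ (k+m))
        = g.coeff m * (-1:ℝ)^m / Real.Gamma (-(b-d-n)) *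
            (c k * (-1:ℝ)^k * Real.Gamma (d + m + k) * Real.Gamma ((n:ℝ) - b - m - k)) := by
      intro k hk m hm
      rw [Finset.mem_range, Nat.lt_succ_iff] at hk
      rw [Finset.mem_range] at hm
      rw [MeasureTheory.integral_const_mul, (hmom k m hk hm).2]
      have e1 : d + ((k+m : ℕ) : ℝ) = d + m + k := by push_cast; ring
      have e2 : -((b-d-n) + d + ((k+m : ℕ) : ℝ)) = (n:ℝ) - b - m - k := by push_cast; ring
      have e3 : (-1:ℝ)^(k+m) = (-1:ℝ)^k * (-1:ℝ)^m := pow_add (-1:ℝ) k m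
      rw [e1, e2, e3]
      ring
    rw [Finset.sum_congr rfl (fun k hk => Finset.sum_congr rfl (fun m hm => hval k hk m hm))]
    rw [Finset.sum_comm]
    apply Finset.sum_eq_zero
    intro m hm
    rw [Finset.mem_range] at hm
    rw [← Finset.mul_sum]
    rw [key_vanish n m hm b d hd hb]
    ring
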